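/- For every k ≥ 1 and all integers n₁, …, n_k ≥ 1, the graph F(n₁,…,n_k) is move equivalent via the moves (O) and (I-) to the graph F(1,1,…,1) with k entries equal to 1 (a path of length k ending in a sink). -/

import Mathlib

open Classical

/-- A graph in the sense of graph C*-algebras: finitely many vertices,
countably many edges, with source and range maps. -/
structure CKGraph where
  V : Type
  E : Type
  finV : Finite V
  cntE : Countable E
  s : E → V
  r : E → V

attribute [instance] CKGraph.finV CKGraph.cntE

namespace CKGraph

/-- Isomorphism of graphs: bijections on vertices and edges intertwining
the source and range maps. -/
def Iso (G H : CKGraph) : Prop :=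
  ∃ (f : G.V ≃ H.V) (g : G.E ≃ H.E),
    (∀ e, H.s (g e) = f (G.s e)) ∧ (∀ e, H.r (g e) = f (G.r e))

/-- A vertex is a source if it receives no edges. -/
def IsSource (G : CKGraph) (v : G.V) : Prop := ∀ e, G.r e ≠ v

/-- A vertex is a sink if it emits no edges. -/
def IsSink (G : CKGraph) (v : G.V) : Prop := ∀ e, G.s e ≠ v

/-- A vertex is regular if it emits at least one and only finitely many edges. -/
def Regular (G : CKGraph) (v : G.V) : Prop :=
  Nonempty {e : G.E // G.s e = v} ∧ Finite {e : G.E // G.s e = v}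

/-- The outsplit graph of `G` at the vertex `w` with respect to the
partition of `s⁻¹(w)` encoded by `P`. -/
noncomputable def outsplit (G : CKGraph) (w : G.V) (n : ℕ)
    (P : {e : G.E // G.s e = w} → Fin n) : CKGraph where
  V := {v : G.V // v ≠ w} ⊕ Fin n
  E := {e : G.E // G.r e ≠ w} ⊕ ({e : G.E // G.r e = w} × Fin n)
  finV := inferInstance
  cntE := inferInstance
  s := Sum.elim
    (fun e => if h : G.s e.1 = w then Sum.inr (P ⟨e.1, h⟩) else Sum.inl ⟨G.s e.1, h⟩)
    (fun ei => if h : G.s ei.1.1 = w then Sum.inr (P ⟨ei.1.1, h⟩)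
               else Sum.inl ⟨G.s ei.1.1, h⟩)
  r := Sum.elim
    (fun e => Sum.inl ⟨G.r e.1, e.2⟩)
    (fun ei => Sum.inr ei.2)

/-- Move (O): `H` is obtained from `G` by an outsplit at a non-sink `w`
with respect to a partition of `s⁻¹(w)` into nonempty sets, at most one of
which is infinite. -/
def MoveO (G H : CKGraph) : Prop :=
  ∃ (w : G.V) (n : ℕ) (P : {e : G.E // G.s e = w} → Fin n),
    Nonempty {e : G.E // G.s e = w} ∧
    Function.Surjective P ∧
    (∀ i j : Fin n, {e | P e = i}.Infinite → {e | P e = j}.Infinite → i = j) ∧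
    Iso (G.outsplit w n P) H

/-- The insplit graph of `G` at the regular vertex `w` with respect to the
partition of `r⁻¹(w)` (into possibly empty sets) encoded by `P`. -/
noncomputable def insplit (G : CKGraph) (w : G.V) (n : ℕ)
    (P : {e : G.E // G.r e = w} → Fin n) : CKGraph where
  V := {v : G.V // v ≠ w} ⊕ Fin n
  E := {e : G.E // G.s e ≠ w} ⊕ ({e : G.E // G.s e = w} × Fin n)
  finV := inferInstance
  cntE := inferInstance
  s := Sum.elim
    (fun e => Sum.inl ⟨G.s e.1, e.2⟩)
    (fun ei => Sum.inr ei.2)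
  r := Sum.elim
    (fun e => if h : G.r e.1 = w then Sum.inr (P ⟨e.1, h⟩) else Sum.inl ⟨G.r e.1, h⟩)
    (fun ei => if h : G.r ei.1.1 = w then Sum.inr (P ⟨ei.1.1, h⟩)
               else Sum.inl ⟨G.r ei.1.1, h⟩)

/-- Move (I-): `H` is obtained from `G` by an insplit at a regular vertex `w`
with respect to a partition of `r⁻¹(w)` into `n ≥ 1` possibly empty sets. -/
def MoveIm (G H : CKGraph) : Prop :=
  ∃ (w : G.V) (n : ℕ) (P : {e : G.E // G.r e = w} → Fin n),
    G.Regular w ∧ 1 ≤ n ∧ Iso (G.insplit w n P) H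

/-- Move (I+): `G` and `H` are both obtained from a common graph `K` by
insplitting at the same regular vertex via two partitions with the same
number of (possibly empty) sets. -/
def MoveIp (G H : CKGraph) : Prop :=
  ∃ (K : CKGraph) (w : K.V) (n : ℕ)
    (P Q : {e : K.E // K.r e = w} → Fin n),
    K.Regular w ∧ 1 ≤ n ∧
    Iso (K.insplit w n P) G ∧ Iso (K.insplit w n Q) H

/-- The reduced graph of `G` at a regular vertex `w` supporting no loop. -/
noncomputable def reduce (G : CKGraph) (w : G.V) : CKGraph where
  V := {v : G.V // v ≠ w} ⊕ Unit
  E := {e : G.E // G.s e ≠ w ∧ G.r e ≠ w} ⊕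
       (({e : G.E // G.r e = w} × {f : G.E // G.s f = w}) ⊕ {f : G.E // G.s f = w})
  finV := inferInstance
  cntE := inferInstance
  s := Sum.elim
    (fun e => Sum.inl ⟨G.s e.1, e.2.1⟩)
    (Sum.elim
      (fun ef => if h : G.s ef.1.1 = w then Sum.inr () else Sum.inl ⟨G.s ef.1.1, h⟩)
      (fun _ => Sum.inr ()))
  r := Sum.elim
    (fun e => Sum.inl ⟨G.r e.1, e.2.2⟩)
    (Sum.elim
      (fun ef => if h : G.r ef.2.1 = w then Sum.inr () else Sum.inl ⟨G.r ef.2.1, h⟩)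
      (fun f => if h : G.r f.1 = w then Sum.inr () else Sum.inl ⟨G.r f.1, h⟩))

/-- Move (R+): `H` is obtained from `G` by a unital reduction at a regular
vertex `w` which supports no loop. -/
def MoveRp (G H : CKGraph) : Prop :=
  ∃ w : G.V, G.Regular w ∧ (∀ e : G.E, ¬ (G.s e = w ∧ G.r e = w)) ∧
    Iso (G.reduce w) H

/-- Two graphs are move equivalent via the relation `R` (describing the
allowed moves) if there is a finite sequence of graphs starting at the first,
each obtained from the previous by a move in `R` or the inverse of such a
move, and ending at a graph isomorphic to the second. -/
def MoveEquiv (R : CKGraph → CKGraph → Prop) (G H : CKGraph) : Prop :=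
  ∃ K, Relation.ReflTransGen (fun A B => R A B ∨ R B A) G K ∧ Iso K H

/-- The graph `G(c,n)`: a vertex with `c` loops, receiving `n` edges from a
second (source) vertex; for `n = 0` the source vertex is omitted. -/
def Gcn (c n : ℕ) : CKGraph where
  V := Unit ⊕ Fin (min n 1)
  E := Fin c ⊕ Fin n
  finV := inferInstance
  cntE := inferInstance
  s := Sum.elim (fun _ => Sum.inl ()) (fun e => Sum.inr ⟨0, lt_min e.pos one_pos⟩)
  r := fun _ => Sum.inl ()

/-- The graph with adjacency matrix `A` (the `(i,j)` entry being the number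
of edges from vertex `i` to vertex `j`). -/
def adjGraph {k : ℕ} (A : Fin k → Fin k → ℕ) : CKGraph where
  V := Fin k
  E := (i : Fin k) × (j : Fin k) × Fin (A i j)
  finV := inferInstance
  cntE := inferInstance
  s := fun e => e.1
  r := fun e => e.2.1


/-- Entry-wise product of two 2×2 matrices of natural numbers. -/
def matMul (A B : Fin 2 → Fin 2 → ℕ) : Fin 2 → Fin 2 → ℕ := fun i j => ∑ l, A i l * B l j

/-- Matrix-vector product for 2×2 matrices of natural numbers. -/
def matVec (A : Fin 2 → Fin 2 → ℕ) (D : Fin 2 → ℕ) : Fin 2 → ℕ := fun i => ∑ l, A i l * D l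

def T1 : Fin 2 → Fin 2 → ℕ := ![![1, 1], ![0, 1]]

def T2 : Fin 2 → Fin 2 → ℕ := ![![1, 0], ![1, 1]]

/-- The graph represented by the pair `(D, B)`: the graph `Γ(d₁-1, d₂-1; a)`
with `a i j = b j i + δ i j`. -/
def pairGraph (D : Fin 2 → ℕ) (B : Fin 2 → Fin 2 → ℕ) : CKGraph :=
  adjGraph ![![0, D 0 - 1, D 1 - 1], ![0, B 0 0 + 1, B 1 0], ![0, B 0 1, B 1 1 + 1]]

/-- Number of edges emitted by the auxiliary source attached above vertex
`u_t` in the graph `F(n₁,…,n_k)`; here `n t` denotes `n_{t+1}` (0-indexed). -/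
def srcCount (k : ℕ) (n : Fin k → ℕ) (t : Fin k) : ℕ :=
  if t.val + 1 < k then n t - 1 else n t

/-- The graph `F(n₁,…,n_k)` : vertices `u₀,…,u_{k-1}` (`u₀` a sink), one edge
`u_j → u_{j-1}` for `1 ≤ j ≤ k-1`, and for each `t` a source emitting
`srcCount` edges to `u_t` (present only when that count is positive), so that
the number of paths of length `i` ending at `u₀` is `nᵢ`. -/
def Fgraph (k : ℕ) (n : Fin k → ℕ) : CKGraph where
  V := Fin k ⊕ {t : Fin k // 0 < srcCount k n t}
  E := {j : Fin k // 0 < j.val} ⊕ ((t : Fin k) × Fin (srcCount k n t))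
  finV := inferInstance
  cntE := inferInstance
  s := Sum.elim (fun j => Sum.inl j.1) (fun te => Sum.inr ⟨te.1, te.2.pos⟩)
  r := Sum.elim
    (fun j => Sum.inl ⟨j.1.val - 1, lt_of_le_of_lt (Nat.sub_le _ _) j.1.isLt⟩)
    (fun te => Sum.inl te.1)

/-- The graph `E(n₁,…,n_k)` : a cycle `v₀ → v₁ → ⋯ → v_{k-1} → v₀` together
with a single extra vertex emitting `n i` edges to `v i`; the extra vertex is
omitted when all `n i = 0`. -/
def Egraph (k : ℕ) (n : Fin k → ℕ) : CKGraph where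
  V := Fin k ⊕ {_u : Unit // ∃ i, 0 < n i}
  E := Fin k ⊕ ((i : Fin k) × Fin (n i))
  finV := inferInstance
  cntE := inferInstance
  s := Sum.elim (fun j => Sum.inl j) (fun ie => Sum.inr ⟨(), ⟨ie.1, ie.2.pos⟩⟩)
  r := Sum.elim (fun j => Sum.inl ⟨(j.val + 1) % k, Nat.mod_lt _ j.pos⟩)
    (fun ie => Sum.inl ie.1)

/-- The graph `T k` : vertices `u₀,…,u_k`, countably infinitely many loops at
`u₀` and exactly one edge `u_j → u_{j-1}` for `1 ≤ j ≤ k`. -/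
def Tgraph (k : ℕ) : CKGraph where
  V := Fin (k + 1)
  E := ℕ ⊕ {j : Fin (k + 1) // 0 < j.val}
  finV := inferInstance
  cntE := inferInstance
  s := Sum.elim (fun _ => ⟨0, Nat.succ_pos k⟩) (fun j => j.1)
  r := Sum.elim (fun _ => ⟨0, Nat.succ_pos k⟩)
    (fun j => ⟨j.1.val - 1, lt_of_le_of_lt (Nat.sub_le _ _) j.1.isLt⟩)

/-- One-step reachability: there is an edge from `u` to `v`. -/
def Step (G : CKGraph) (u v : G.V) : Prop := ∃ e, G.s e = u ∧ G.r e = v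

/-- There is a (possibly empty) path from `u` to `v`. -/
def Reaches (G : CKGraph) : G.V → G.V → Prop := Relation.ReflTransGen G.Step

/-- `v` lies on a cycle: there is a nontrivial path from `v` back to `v`. -/
def OnCycle (G : CKGraph) (v : G.V) : Prop := ∃ u, G.Step v u ∧ G.Reaches u v

/-- The core of `G`: the vertices lying on cycles if `G` has a cycle, and
otherwise the sinks. -/
def core (G : CKGraph) (v : G.V) : Prop :=
  ((∃ u, G.OnCycle u) → G.OnCycle v) ∧ ((¬ ∃ u, G.OnCycle u) → G.IsSink v)

/-- A transitional vertex: neither a source nor in the core. -/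
def Transitional (G : CKGraph) (v : G.V) : Prop := ¬ G.IsSource v ∧ ¬ G.core v

/-- The core hypotheses: any two vertices on cycles are mutually connected by
paths; if there is a cycle there are no sinks, otherwise there is exactly one
sink; every vertex reaches the core; and every non-core vertex emits only
finitely many edges. -/
structure CoreHyp (G : CKGraph) : Prop where
  conn : ∀ u v, G.OnCycle u → G.OnCycle v → G.Reaches u v
  noSinks : (∃ v, G.OnCycle v) → ∀ v, ¬ G.IsSink v
  uniqueSink : (¬ ∃ v, G.OnCycle v) → ∃! v, G.IsSink v
  reach : ∀ v, ∃ c, G.core c ∧ G.Reaches v c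
  finEmit : ∀ v, ¬ G.core v → Finite {e : G.E // G.s e = v}

/-- The core subgraph: core vertices together with all edges between them. -/
def coreSubgraph (G : CKGraph) : CKGraph where
  V := {v : G.V // G.core v}
  E := {e : G.E // G.core (G.s e) ∧ G.core (G.r e)}
  finV := inferInstance
  cntE := inferInstance
  s := fun e => ⟨G.s e.1, e.2.1⟩
  r := fun e => ⟨G.r e.1, e.2.2⟩

end CKGraph

open CKGraph

section Proof
open CKGraph
variable {k : ℕ}

lemma isoRefl (G : CKGraph) : Iso G G := ⟨Equiv.refl _, Equiv.refl _, fun _ => rfl, fun _ => rfl⟩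

def nupd (n : Fin k → ℕ) (t : Fin k) : Fin k → ℕ := fun i => if i = t then 1 else n i

lemma srcCount_nupd_ne (n : Fin k → ℕ) (t : Fin k) {t' : Fin k} (h : t' ≠ t) :
    srcCount k (nupd n t) t' = srcCount k n t' := by
  simp [srcCount, nupd, h]

lemma srcCount_nupd_self (n : Fin k → ℕ) (t : Fin k) (h1 : t.val + 1 < k) :
    srcCount k (nupd n t) t = 0 := by
  simp [srcCount, nupd, h1]

lemma srcCount_nupd_last (n : Fin k → ℕ) (t : Fin k) (h1 : ¬ t.val + 1 < k) :
    srcCount k (nupd n t) t = 1 := by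
  simp [srcCount, nupd, h1]

noncomputable def Ppart (n : Fin k → ℕ) (t : Fin k) (hc : 0 < srcCount k n t) :
    {e : (Fgraph k n).E // (Fgraph k n).s e = Sum.inr ⟨t, hc⟩} → Fin (srcCount k n t) :=
  fun e => match e with
  | ⟨Sum.inl _, h⟩ => absurd h (fun h => (by cases h))
  | ⟨Sum.inr te, h⟩ =>
      Fin.cast (congrArg (srcCount k n) (congrArg Subtype.val (Sum.inr.inj h))) te.2

lemma Ppart_surj (n : Fin k → ℕ) (t : Fin k) (hc : 0 < srcCount k n t) :
    Function.Surjective (Ppart n t hc) := by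
  intro i
  exact ⟨⟨Sum.inr ⟨t, i⟩, rfl⟩, by simp [Ppart, Fin.ext_iff]⟩

abbrev Rmv : CKGraph → CKGraph → Prop :=
  fun A B => (MoveO A B ∨ MoveIm A B) ∨ (MoveO B A ∨ MoveIm B A)

/-! ### Case A : `t+1 < k` -/
section CaseA
variable (n : Fin k → ℕ) (t : Fin k) (h1 : t.val + 1 < k) (hc : 0 < srcCount k n t)

noncomputable def fAV :
    ((Fgraph k n).outsplit (Sum.inr ⟨t, hc⟩) (srcCount k n t) (Ppart n t hc)).V →
    ((Fgraph k (nupd n t)).insplit (Sum.inl ⟨t.val + 1, h1⟩) (srcCount k n t + 1)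
      (fun _ => 0)).V
  | Sum.inl ⟨Sum.inl j, _⟩ =>
      if hj : j = ⟨t.val + 1, h1⟩ then Sum.inr 0
      else Sum.inl ⟨Sum.inl j, fun h => hj (Sum.inl.inj h)⟩
  | Sum.inl ⟨Sum.inr ⟨t', h'⟩, hne⟩ =>
      have ht' : t' ≠ t := fun h => hne (by cases h; rfl)
      Sum.inl ⟨Sum.inr ⟨t', by rw [srcCount_nupd_ne n t ht']; exact h'⟩,
        fun h => (by cases h)⟩
  | Sum.inr j => Sum.inr j.succ

noncomputable def fAVinv :
    ((Fgraph k (nupd n t)).insplit (Sum.inl ⟨t.val + 1, h1⟩) (srcCount k n t + 1)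
      (fun _ => 0)).V →
    ((Fgraph k n).outsplit (Sum.inr ⟨t, hc⟩) (srcCount k n t) (Ppart n t hc)).V
  | Sum.inl ⟨Sum.inl j, _⟩ => Sum.inl ⟨Sum.inl j, fun h => (by cases h)⟩
  | Sum.inl ⟨Sum.inr ⟨t', h'⟩, _⟩ =>
      have ht' : t' ≠ t := fun h => by
        rw [h, srcCount_nupd_self n t h1] at h'; exact absurd h' (lt_irrefl 0)
      Sum.inl ⟨Sum.inr ⟨t', by rw [← srcCount_nupd_ne n t ht']; exact h'⟩,
        fun h => ht' (congrArg Subtype.val (Sum.inr.inj h))⟩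
  | Sum.inr i => Fin.cases
      (Sum.inl ⟨Sum.inl ⟨t.val + 1, h1⟩, fun h => (by cases h)⟩)
      (fun j => Sum.inr j) i

noncomputable def gAE :
    ((Fgraph k n).outsplit (Sum.inr ⟨t, hc⟩) (srcCount k n t) (Ppart n t hc)).E →
    ((Fgraph k (nupd n t)).insplit (Sum.inl ⟨t.val + 1, h1⟩) (srcCount k n t + 1)
      (fun _ => 0)).E
  | Sum.inl ⟨Sum.inl j, _⟩ =>
      if hj : j.1 = ⟨t.val + 1, h1⟩ then
        Sum.inr (⟨Sum.inl j, congrArg Sum.inl hj⟩, 0)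
      else Sum.inl ⟨Sum.inl j, fun h => hj (Sum.inl.inj h)⟩
  | Sum.inl ⟨Sum.inr ⟨t', i⟩, _⟩ =>
      if ht' : t' = t then
        Sum.inr (⟨Sum.inl ⟨⟨t.val + 1, h1⟩, Nat.succ_pos _⟩, rfl⟩,
          (Fin.cast (by rw [ht']) i).succ)
      else Sum.inl ⟨Sum.inr ⟨t', Fin.cast (srcCount_nupd_ne n t ht').symm i⟩,
        fun h => (by cases h)⟩
  | Sum.inr (⟨Sum.inl j, he⟩, _) => absurd he (fun h => (by cases h))
  | Sum.inr (⟨Sum.inr te, he⟩, _) => absurd he (fun h => (by cases h))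

noncomputable def gAEinv :
    ((Fgraph k (nupd n t)).insplit (Sum.inl ⟨t.val + 1, h1⟩) (srcCount k n t + 1)
      (fun _ => 0)).E →
    ((Fgraph k n).outsplit (Sum.inr ⟨t, hc⟩) (srcCount k n t) (Ppart n t hc)).E
  | Sum.inl ⟨Sum.inl j, _⟩ => Sum.inl ⟨Sum.inl j, fun h => (by cases h)⟩
  | Sum.inl ⟨Sum.inr ⟨t', i⟩, _⟩ =>
      if ht' : t' = t then
        (Fin.cast (by rw [ht', srcCount_nupd_self n t h1]) i : Fin 0).elim0
      else Sum.inl ⟨Sum.inr ⟨t', Fin.cast (srcCount_nupd_ne n t ht') i⟩,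
        fun h => (by cases h)⟩
  | Sum.inr (⟨Sum.inl j, hs⟩, i) =>
      Fin.cases (Sum.inl ⟨Sum.inl j, fun h => (by cases h)⟩)
        (fun i' => Sum.inl ⟨Sum.inr ⟨t, i'⟩, fun h => (by cases h)⟩) i
  | Sum.inr (⟨Sum.inr te, hs⟩, _) => absurd hs (fun h => (by cases h))

end CaseA
end Proof
section Proof2
open CKGraph
variable {k : ℕ}

lemma Ppart_apply (n : Fin k → ℕ) (t : Fin k) (hc : 0 < srcCount k n t)
    (i : Fin (srcCount k n t)) (h) :
    Ppart n t hc ⟨Sum.inr ⟨t, i⟩, h⟩ = i := by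
  simp [Ppart, Fin.ext_iff]

set_option maxHeartbeats 1000000 in
lemma isoA (n : Fin k → ℕ) (t : Fin k) (h1 : t.val + 1 < k) (hc : 0 < srcCount k n t) :
    Iso ((Fgraph k n).outsplit (Sum.inr ⟨t, hc⟩) (srcCount k n t) (Ppart n t hc))
      ((Fgraph k (nupd n t)).insplit (Sum.inl ⟨t.val + 1, h1⟩) (srcCount k n t + 1)
        (fun _ => 0)) := by
  refine ⟨⟨fAV n t h1 hc, fAVinv n t h1 hc, ?_, ?_⟩,
    ⟨gAE n t h1 hc, gAEinv n t h1 hc, ?_, ?_⟩, ?_, ?_⟩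
  · rintro (⟨(j | ⟨t', h'⟩), hne⟩ | j)
    · by_cases hj : j = ⟨t.val + 1, h1⟩ <;> simp [fAV, fAVinv, hj] <;> rfl
    · simp [fAV, fAVinv] <;> rfl
    · simp [fAV, fAVinv] <;> rfl
  · rintro (⟨(j | ⟨t', h'⟩), hne⟩ | i)
    · have hj : j ≠ ⟨t.val + 1, h1⟩ := fun h => hne (congrArg Sum.inl h)
      simp [fAV, fAVinv, hj] <;> rfl
    · simp [fAV, fAVinv] <;> rfl
    · induction i using Fin.cases <;> simp [fAV, fAVinv]
      · exact dif_pos rfl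
      · rfl
  · rintro (⟨(j | ⟨t', i⟩), hne⟩ | ⟨⟨(j | te), he⟩, i⟩)
    · by_cases hj : j.1 = ⟨t.val + 1, h1⟩ <;> simp [gAE, gAEinv, hj] <;> rfl
    · by_cases ht' : t' = t
      · subst ht'; simp [gAE, gAEinv] <;> rfl
      · simp [gAE, gAEinv, ht'] <;> rfl
    · exact absurd he (fun h => (by cases h))
    · exact absurd he (fun h => (by cases h))
  · rintro (⟨(j | ⟨t', i⟩), hs⟩ | ⟨⟨(j | te), hs⟩, i⟩)
    · have hj : j.1 ≠ ⟨t.val + 1, h1⟩ := fun h => hs (congrArg Sum.inl h)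
      simp [gAE, gAEinv, hj] <;> rfl
    · have ht' : t' ≠ t := by
        intro h
        have hp : 0 < srcCount k (nupd n t) t' := i.pos
        rw [h, srcCount_nupd_self n t h1] at hp; omega
      simp [gAE, gAEinv, ht'] <;> rfl
    · obtain ⟨jv, hpos⟩ := j
      have hj : jv = ⟨t.val + 1, h1⟩ := Sum.inl.inj hs
      subst hj
      induction i using Fin.cases <;> exact dif_pos rfl
    · exact absurd hs (fun h => (by cases h))
  · rintro (⟨(j | ⟨t', i⟩), hne⟩ | ⟨⟨(j | te), he⟩, i⟩)
    all_goals simp only [Equiv.coe_fn_mk]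
    · by_cases hj : j.1 = ⟨t.val + 1, h1⟩ <;>
        simp [gAE, fAV, outsplit, insplit, Fgraph, hj] <;> rfl
    · by_cases ht' : t' = t
      · subst ht'
        simp [gAE, fAV, outsplit, insplit, Fgraph, Fin.ext_iff]
        rfl
      · simp [gAE, fAV, outsplit, insplit, Fgraph, ht'] <;> rfl
    · exact absurd he (fun h => (by cases h))
    · exact absurd he (fun h => (by cases h))
  · rintro (⟨(j | ⟨t', i⟩), hne⟩ | ⟨⟨(j | te), he⟩, i⟩)
    all_goals simp only [Equiv.coe_fn_mk]
    · by_cases hj : j.1 = ⟨t.val + 1, h1⟩ <;>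
      by_cases hj2 : (⟨j.1.val - 1, lt_of_le_of_lt (Nat.sub_le _ _) j.1.isLt⟩ : Fin k)
          = ⟨t.val + 1, h1⟩ <;>
        simp [gAE, fAV, outsplit, insplit, Fgraph, hj, hj2] <;> rfl
    · by_cases ht' : t' = t
      · subst ht'
        have ht2 : t' ≠ (⟨t'.val + 1, h1⟩ : Fin k) := fun h => by
          have := congrArg Fin.val h; simp at this
        simp [gAE, fAV, outsplit, insplit, Fgraph, ht2, Fin.ext_iff] <;> rfl
      · by_cases ht2 : t' = ⟨t.val + 1, h1⟩
        · subst ht2; simp [gAE, fAV, outsplit, insplit, Fgraph, ht'] <;> rfl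
        · simp [gAE, fAV, outsplit, insplit, Fgraph, ht', ht2] <;> rfl
    · exact absurd he (fun h => (by cases h))
    · exact absurd he (fun h => (by cases h))

end Proof2
section Proof3
open CKGraph
variable {k : ℕ}

instance instFiniteFgraphE (n : Fin k → ℕ) : Finite (Fgraph k n).E :=
  inferInstanceAs (Finite ({j : Fin k // 0 < j.val} ⊕ ((t : Fin k) × Fin (srcCount k n t))))

lemma stepA (n : Fin k → ℕ) (t : Fin k) (h1 : t.val + 1 < k) (h2 : 2 ≤ n t) :
    Relation.ReflTransGen Rmv (Fgraph k n) (Fgraph k (nupd n t)) := by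
  have hc : 0 < srcCount k n t := by simp [srcCount, h1]; omega
  have hO : MoveO (Fgraph k n)
      ((Fgraph k (nupd n t)).insplit (Sum.inl ⟨t.val + 1, h1⟩) (srcCount k n t + 1)
        (fun _ => 0)) :=
    ⟨Sum.inr ⟨t, hc⟩, srcCount k n t, Ppart n t hc,
      ⟨⟨Sum.inr ⟨t, ⟨0, hc⟩⟩, rfl⟩⟩, Ppart_surj n t hc,
      fun i j hi _ => absurd hi (Set.not_infinite.mpr (Set.toFinite _)),
      isoA n t h1 hc⟩
  have hI : MoveIm (Fgraph k (nupd n t))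
      ((Fgraph k (nupd n t)).insplit (Sum.inl ⟨t.val + 1, h1⟩) (srcCount k n t + 1)
        (fun _ => 0)) :=
    ⟨Sum.inl ⟨t.val + 1, h1⟩, srcCount k n t + 1, fun _ => 0,
      ⟨⟨⟨Sum.inl ⟨⟨t.val + 1, h1⟩, Nat.succ_pos _⟩, rfl⟩⟩, inferInstance⟩,
      Nat.succ_le_succ (Nat.zero_le _), isoRefl _⟩
  exact Relation.ReflTransGen.tail
    (Relation.ReflTransGen.single (show Rmv _ _ from Or.inl (Or.inl hO)))
    (show Rmv _ _ from Or.inr (Or.inr hI))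

/-! ### Case B : `t+1 = k` -/
section CaseB
variable (n : Fin k → ℕ) (t : Fin k) (h1 : ¬ t.val + 1 < k) (hc : 0 < srcCount k n t)

noncomputable def wB : (Fgraph k (nupd n t)).V :=
  Sum.inr ⟨t, by rw [srcCount_nupd_last n t h1]; exact one_pos⟩

noncomputable def fBV :
    ((Fgraph k n).outsplit (Sum.inr ⟨t, hc⟩) (srcCount k n t) (Ppart n t hc)).V →
    ((Fgraph k (nupd n t)).insplit (wB n t h1) (srcCount k n t)
      (fun _ => ⟨0, hc⟩)).V
  | Sum.inl ⟨Sum.inl j, _⟩ => Sum.inl ⟨Sum.inl j, fun h => (by cases h)⟩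
  | Sum.inl ⟨Sum.inr ⟨t', h'⟩, hne⟩ =>
      have ht' : t' ≠ t := fun h => hne (by cases h; rfl)
      Sum.inl ⟨Sum.inr ⟨t', by rw [srcCount_nupd_ne n t ht']; exact h'⟩,
        fun h => ht' (congrArg Subtype.val (Sum.inr.inj h))⟩
  | Sum.inr j => Sum.inr j

noncomputable def fBVinv :
    ((Fgraph k (nupd n t)).insplit (wB n t h1) (srcCount k n t)
      (fun _ => ⟨0, hc⟩)).V →
    ((Fgraph k n).outsplit (Sum.inr ⟨t, hc⟩) (srcCount k n t) (Ppart n t hc)).V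
  | Sum.inl ⟨Sum.inl j, _⟩ => Sum.inl ⟨Sum.inl j, fun h => (by cases h)⟩
  | Sum.inl ⟨Sum.inr ⟨t', h'⟩, hne⟩ =>
      have ht' : t' ≠ t := fun h => hne (by cases h; rfl)
      Sum.inl ⟨Sum.inr ⟨t', by rw [← srcCount_nupd_ne n t ht']; exact h'⟩,
        fun h => ht' (congrArg Subtype.val (Sum.inr.inj h))⟩
  | Sum.inr j => Sum.inr j

noncomputable def gBE :
    ((Fgraph k n).outsplit (Sum.inr ⟨t, hc⟩) (srcCount k n t) (Ppart n t hc)).E →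
    ((Fgraph k (nupd n t)).insplit (wB n t h1) (srcCount k n t)
      (fun _ => ⟨0, hc⟩)).E
  | Sum.inl ⟨Sum.inl j, _⟩ => Sum.inl ⟨Sum.inl j, fun h => (by cases h)⟩
  | Sum.inl ⟨Sum.inr ⟨t', i⟩, _⟩ =>
      if ht' : t' = t then
        Sum.inr (⟨Sum.inr ⟨t, ⟨0, by rw [srcCount_nupd_last n t h1]; exact one_pos⟩⟩, rfl⟩,
          Fin.cast (by rw [ht']) i)
      else Sum.inl ⟨Sum.inr ⟨t', Fin.cast (srcCount_nupd_ne n t ht').symm i⟩,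
        fun h => ht' (congrArg Subtype.val (Sum.inr.inj h))⟩
  | Sum.inr (⟨Sum.inl j, he⟩, _) => absurd he (fun h => (by cases h))
  | Sum.inr (⟨Sum.inr te, he⟩, _) => absurd he (fun h => (by cases h))

noncomputable def gBEinv :
    ((Fgraph k (nupd n t)).insplit (wB n t h1) (srcCount k n t)
      (fun _ => ⟨0, hc⟩)).E →
    ((Fgraph k n).outsplit (Sum.inr ⟨t, hc⟩) (srcCount k n t) (Ppart n t hc)).E
  | Sum.inl ⟨Sum.inl j, _⟩ => Sum.inl ⟨Sum.inl j, fun h => (by cases h)⟩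
  | Sum.inl ⟨Sum.inr ⟨t', i⟩, hs⟩ =>
      have ht' : t' ≠ t := fun h => hs (by cases h; rfl)
      Sum.inl ⟨Sum.inr ⟨t', Fin.cast (srcCount_nupd_ne n t ht') i⟩,
        fun h => (by cases h)⟩
  | Sum.inr (⟨Sum.inl j, hs⟩, _) => absurd hs (fun h => (by cases h))
  | Sum.inr (⟨Sum.inr te, hs⟩, i) =>
      Sum.inl ⟨Sum.inr ⟨t, i⟩, fun h => (by cases h)⟩

end CaseB
end Proof3
section Proof4
open CKGraph
variable {k : ℕ}

set_option maxHeartbeats 1000000 in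
lemma isoB (n : Fin k → ℕ) (t : Fin k) (h1 : ¬ t.val + 1 < k) (hc : 0 < srcCount k n t) :
    Iso ((Fgraph k n).outsplit (Sum.inr ⟨t, hc⟩) (srcCount k n t) (Ppart n t hc))
      ((Fgraph k (nupd n t)).insplit (wB n t h1) (srcCount k n t)
        (fun _ => ⟨0, hc⟩)) := by
  refine ⟨⟨fBV n t h1 hc, fBVinv n t h1 hc, ?_, ?_⟩,
    ⟨gBE n t h1 hc, gBEinv n t h1 hc, ?_, ?_⟩, ?_, ?_⟩
  · rintro (⟨(j | ⟨t', h'⟩), hne⟩ | j) <;> simp [fBV, fBVinv] <;> rfl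
  · rintro (⟨(j | ⟨t', h'⟩), hne⟩ | j) <;> simp [fBV, fBVinv] <;> rfl
  · rintro (⟨(j | ⟨t', i⟩), hne⟩ | ⟨⟨(j | te), he⟩, i⟩)
    · simp [gBE, gBEinv] <;> rfl
    · by_cases ht' : t' = t
      · subst ht'; simp [gBE, gBEinv] <;> rfl
      · simp [gBE, gBEinv, ht'] <;> rfl
    · exact absurd he (fun h => (by cases h))
    · exact absurd he (fun h => (by cases h))
  · rintro (⟨(j | ⟨t', i⟩), hs⟩ | ⟨⟨(j | ⟨t2, i2⟩), hs⟩, i⟩)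
    · simp [gBE, gBEinv] <;> rfl
    · have ht' : t' ≠ t := fun h => hs (by cases h; rfl)
      simp [gBE, gBEinv, ht'] <;> rfl
    · exact absurd hs (fun h => (by cases h))
    · have ht2 : t2 = t := congrArg Subtype.val (Sum.inr.inj hs)
      subst ht2
      obtain ⟨iv, hlt⟩ := i2
      have hiv : iv = 0 := by
        have h' := hlt; rw [srcCount_nupd_last _ _ h1] at h'; omega
      subst hiv
      simp only [gBE, gBEinv]
      erw [dif_pos rfl]
      rfl
  · rintro (⟨(j | ⟨t', i⟩), hne⟩ | ⟨⟨(j | te), he⟩, i⟩)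
    all_goals simp only [Equiv.coe_fn_mk]
    · simp [gBE, fBV, outsplit, insplit, Fgraph, wB] <;> rfl
    · by_cases ht' : t' = t
      · subst ht'
        simp [gBE, fBV, outsplit, insplit, Fgraph, wB, Fin.ext_iff]
        rfl
      · simp [gBE, fBV, outsplit, insplit, Fgraph, wB, ht'] <;> rfl
    · exact absurd he (fun h => (by cases h))
    · exact absurd he (fun h => (by cases h))
  · rintro (⟨(j | ⟨t', i⟩), hne⟩ | ⟨⟨(j | te), he⟩, i⟩)
    all_goals simp only [Equiv.coe_fn_mk]
    · simp [gBE, fBV, outsplit, insplit, Fgraph, wB] <;> rfl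
    · by_cases ht' : t' = t
      · subst ht'
        simp [gBE, fBV, outsplit, insplit, Fgraph, wB, Fin.ext_iff] <;> rfl
      · simp [gBE, fBV, outsplit, insplit, Fgraph, wB, ht'] <;> rfl
    · exact absurd he (fun h => (by cases h))
    · exact absurd he (fun h => (by cases h))

lemma stepB (n : Fin k → ℕ) (t : Fin k) (h1 : ¬ t.val + 1 < k) (h2 : 2 ≤ n t) :
    Relation.ReflTransGen Rmv (Fgraph k n) (Fgraph k (nupd n t)) := by
  have hc : 0 < srcCount k n t := by simp [srcCount, h1]; omega
  have hO : MoveO (Fgraph k n)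
      ((Fgraph k (nupd n t)).insplit (wB n t h1) (srcCount k n t)
        (fun _ => ⟨0, hc⟩)) :=
    ⟨Sum.inr ⟨t, hc⟩, srcCount k n t, Ppart n t hc,
      ⟨⟨Sum.inr ⟨t, ⟨0, hc⟩⟩, rfl⟩⟩, Ppart_surj n t hc,
      fun i j hi _ => absurd hi (Set.not_infinite.mpr (Set.toFinite _)),
      isoB n t h1 hc⟩
  have hI : MoveIm (Fgraph k (nupd n t))
      ((Fgraph k (nupd n t)).insplit (wB n t h1) (srcCount k n t)
        (fun _ => ⟨0, hc⟩)) :=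
    ⟨wB n t h1, srcCount k n t, fun _ => ⟨0, hc⟩,
      ⟨⟨⟨Sum.inr ⟨t, ⟨0, by rw [srcCount_nupd_last n t h1]; exact one_pos⟩⟩, rfl⟩⟩,
        inferInstance⟩,
      hc, isoRefl _⟩
  exact Relation.ReflTransGen.tail
    (Relation.ReflTransGen.single (show Rmv _ _ from Or.inl (Or.inl hO)))
    (show Rmv _ _ from Or.inr (Or.inr hI))

end Proof4

open CKGraph
section Final

lemma stepAny {k : ℕ} (n : Fin k → ℕ) (t : Fin k) (h2 : 2 ≤ n t) :
    Relation.ReflTransGen Rmv (Fgraph k n) (Fgraph k (nupd n t)) := by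
  by_cases h1 : t.val + 1 < k
  · exact stepA n t h1 h2
  · exact stepB n t h1 h2

end Final


/-- For `k ≥ 1` and `n₁, …, n_k ≥ 1`, the graph `F(n₁,…,n_k)` is
move equivalent via the moves (O) and (I-) to the graph `F(1,1,…,1)` with `k`
entries equal to `1`. -/
theorem Fgraph_moveEquiv_O_Iminus (k : ℕ) (hk : 1 ≤ k) (n : Fin k → ℕ)
    (hn : ∀ i, 1 ≤ n i) :
    MoveEquiv (fun A B => MoveO A B ∨ MoveIm A B)
      (Fgraph k n) (Fgraph k (fun _ => 1)) := by

  have key : ∀ (m : ℕ) (n : Fin k → ℕ), (∀ i, 1 ≤ n i) → (∑ i, (n i - 1)) ≤ m →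
      Relation.ReflTransGen Rmv (Fgraph k n) (Fgraph k (fun _ => 1)) := by
    intro m
    induction m with
    | zero =>
      intro n hn hm
      have hone : n = fun _ => 1 := funext fun i => by
        have h0 := (Finset.sum_eq_zero_iff.mp (Nat.le_zero.mp hm)) i (Finset.mem_univ i)
        have := hn i; omega
      exact hone ▸ Relation.ReflTransGen.refl
    | succ m ih =>
      intro n hn hm
      by_cases hex : ∃ t, 2 ≤ n t
      · obtain ⟨t, ht⟩ := hex
        refine (stepAny n t ht).trans (ih (nupd n t) ?_ ?_)
        · intro i
          by_cases h : i = t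
          · simp [nupd, h]
          · simpa [nupd, h] using hn i
        · have e1 : ∑ i, (n i - 1) = (n t - 1) + ∑ i ∈ Finset.univ.erase t, (n i - 1) :=
            (Finset.add_sum_erase _ _ (Finset.mem_univ t)).symm
          have e2 : ∑ i, (nupd n t i - 1)
              = (nupd n t t - 1) + ∑ i ∈ Finset.univ.erase t, (nupd n t i - 1) :=
            (Finset.add_sum_erase _ _ (Finset.mem_univ t)).symm
          have e3 : ∑ i ∈ Finset.univ.erase t, (nupd n t i - 1)
              = ∑ i ∈ Finset.univ.erase t, (n i - 1) :=
            Finset.sum_congr rfl fun i hi => by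
              simp [nupd, Finset.ne_of_mem_erase hi]
          have e4 : nupd n t t = 1 := by simp [nupd]
          omega
      · have hone : n = fun _ => 1 := funext fun i => by
          have h2 : ¬ 2 ≤ n i := fun h => hex ⟨i, h⟩
          have := hn i; omega
        exact hone ▸ Relation.ReflTransGen.refl
  exact ⟨Fgraph k (fun _ => 1), key _ n hn le_rfl, isoRefl _⟩
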